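/- arXiv:2408.07693 — 3 statements merged into one kernel-verified Lean document; each statement's English description precedes it below -/
import Mathlib

section
/- (Finite-dimensional McKean–Singer theorem.) Let V be a finite-dimensional complex inner product space with an orthogonal decomposition V = V₀ ⊕ V₁ (V₁ the orthogonal complement of V₀), and let ε : V → V be the grading operator equal to the identity on V₀ and minus the identity on V₁. Let Q : V → V be a self-adjoint linear map that is odd, meaning Q(V₀) ⊆ V₁ and Q(V₁) ⊆ V₀. Then for every real number t, trace(ε ∘ exp(−t • Q²)) = dim(ker Q ∩ V₀) − dim(ker Q ∩ V₁). In particular, the super trace of the heat semigroup e^{−tQ²} is independent of t. -/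
open NormedSpace Module

private lemma mcks_rank_aux {V : Type*} [NormedAddCommGroup V] [InnerProductSpace ℂ V]
    [FiniteDimensional ℂ V] (W : Submodule ℂ V) (f : V →ₗ[ℂ] V) :
    finrank ℂ W = finrank ℂ (LinearMap.ker f ⊓ W : Submodule ℂ V)
      + finrank ℂ (W.map f : Submodule ℂ V) := by
  have h := LinearMap.finrank_range_add_finrank_ker (f.domRestrict W)
  rw [LinearMap.range_domRestrict, LinearMap.ker_domRestrict] at h
  have hcc : (LinearMap.ker f).comap W.subtype = (LinearMap.ker f ⊓ W).comap W.subtype := by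
    ext x; simp [Submodule.mem_comap]
  rw [hcc] at h
  have e := Submodule.comapSubtypeEquivOfLe (inf_le_right : LinearMap.ker f ⊓ W ≤ W)
  rw [e.finrank_eq] at h
  omega

private lemma mcks_le_aux {V : Type*} [NormedAddCommGroup V] [InnerProductSpace ℂ V]
    [FiniteDimensional ℂ V] (S T : Submodule ℂ V) (f : V →ₗ[ℂ] V)
    (hST : ∀ x ∈ S, f x ∈ T) (hinj : ∀ x ∈ S, f x = 0 → x = 0) :
    finrank ℂ S ≤ finrank ℂ T := by
  set g : S →ₗ[ℂ] T := (f.domRestrict S).codRestrict T (fun x => show (f.domRestrict S) x ∈ T from hST x x.2) with hg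
  apply LinearMap.finrank_le_finrank_of_injective (f := g)
  rw [← LinearMap.ker_eq_bot, hg, LinearMap.ker_codRestrict, LinearMap.ker_domRestrict]
  rw [Submodule.eq_bot_iff]
  rintro ⟨x, hxS⟩ hx
  exact Subtype.ext (hinj x hxS hx)

private lemma mcks_trace_aux {V : Type*} [NormedAddCommGroup V] [InnerProductSpace ℂ V]
    [FiniteDimensional ℂ V] (F A E : Module.End ℂ V)
    (hAF : A * F = -(F * A)) (hAE : A * E = E * A) :
    LinearMap.trace ℂ V (F * (E * (A * A))) = 0 := by
  have h2 : A * (F * (E * A)) = -(F * (E * (A * A))) := by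
    rw [← mul_assoc, hAF, neg_mul]
    congr 1
    rw [mul_assoc F A (E * A), ← mul_assoc A E A, hAE, mul_assoc E A A]
  have key : LinearMap.trace ℂ V (F * (E * (A * A)))
      = - LinearMap.trace ℂ V (F * (E * (A * A))) := by
    conv_lhs => rw [show F * (E * (A * A)) = (F * (E * A)) * A by
      rw [mul_assoc F (E * A) A, mul_assoc E A A]]
    rw [LinearMap.trace_mul_comm, h2, map_neg]
  linear_combination key / 2

/-- finite-dimensional McKean–Singer theorem: Let `V` be a
finite-dimensional complex inner product space with orthogonal decomposition
`V = V₀ ⊕ V₀ᗮ`, grading operator `ε` (identity on `V₀`, minus identity on `V₀ᗮ`),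
and `Q` a self-adjoint odd operator.  Then for every real `t`,
`trace(ε ∘ exp(−t • Q²)) = dim(ker Q ∩ V₀) − dim(ker Q ∩ V₀ᗮ)`. -/
theorem mcKean_singer
    {V : Type*} [NormedAddCommGroup V] [InnerProductSpace ℂ V] [FiniteDimensional ℂ V]
    (V₀ : Submodule ℂ V)
    (Q : V →L[ℂ] V) (hQ : LinearMap.IsSymmetric (Q : V →ₗ[ℂ] V))
    (h0 : ∀ x ∈ V₀, Q x ∈ V₀ᗮ) (h1 : ∀ x ∈ V₀ᗮ, Q x ∈ V₀)
    (ε : V →L[ℂ] V) (hε0 : ∀ x ∈ V₀, ε x = x) (hε1 : ∀ x ∈ V₀ᗮ, ε x = -x)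
    (t : ℝ) :
    LinearMap.trace ℂ V
        ((ε.comp (NormedSpace.exp ((-(t : ℂ)) • (Q.comp Q)))) : V →ₗ[ℂ] V)
      = ((Module.finrank ℂ (LinearMap.ker (Q : V →ₗ[ℂ] V) ⊓ V₀ : Submodule ℂ V) : ℤ)
          - (Module.finrank ℂ (LinearMap.ker (Q : V →ₗ[ℂ] V) ⊓ V₀ᗮ : Submodule ℂ V) : ℤ)
          : ℂ) := by
  classical
  set Qₗ : V →ₗ[ℂ] V := (Q : V →ₗ[ℂ] V) with hQₗ
  set εₗ : V →ₗ[ℂ] V := (ε : V →ₗ[ℂ] V) with hεₗ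
  -- decomposition of any vector
  have hdecomp : ∀ x : V, ∃ a b, a ∈ V₀ ∧ b ∈ V₀ᗮ ∧ x = a + b := by
    intro x
    refine ⟨Submodule.orthogonalProjectionOnto V₀ x, Submodule.orthogonalProjectionOnto V₀ᗮ x,
      (Submodule.orthogonalProjectionOnto V₀ x).2, (Submodule.orthogonalProjectionOnto V₀ᗮ x).2, ?_⟩
    exact (Submodule.starProjection_add_starProjection_orthogonal (K := V₀) x).symm
  -- anticommutation  Q ε = - ε Q
  have hAF : Qₗ * εₗ = -(εₗ * Qₗ) := by
    apply LinearMap.ext; intro x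
    obtain ⟨a, b, ha, hb, rfl⟩ := hdecomp x
    simp only [Module.End.mul_apply, LinearMap.neg_apply, hQₗ, hεₗ,
      ContinuousLinearMap.coe_coe, map_add]
    rw [hε0 a ha, hε1 b hb, hε1 _ (h0 a ha), hε0 _ (h1 b hb)]
    simp
  -- the heat semigroup argument
  set H : V →L[ℂ] V := Q * Q with hH
  set T : (V →L[ℂ] V) →ₗ[ℂ] ℂ :=
    (LinearMap.trace ℂ V) ∘ₗ (ContinuousLinearMap.coeLM ℂ) ∘ₗ
      ((ContinuousLinearMap.compL ℂ V V V ε) : (V →L[ℂ] V) →ₗ[ℂ] (V →L[ℂ] V)) with hT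
  have hTapp : ∀ A : V →L[ℂ] V, T A = LinearMap.trace ℂ V ((ε.comp A : V →L[ℂ] V) : V →ₗ[ℂ] V) := by
    intro A; rfl
  set g : ℂ → ℂ := fun s => (LinearMap.toContinuousLinearMap T) (exp (s • H)) with hgdef
  have hderiv : ∀ s : ℂ, HasDerivAt g 0 s := by
    intro s
    have h1 : HasDerivAt (fun u : ℂ => exp (u • H)) (exp (s • H) * H) s :=
      hasDerivAt_exp_smul_const H s
    have h2 : HasDerivAt g ((LinearMap.toContinuousLinearMap T) (exp (s • H) * H)) s :=
      ((LinearMap.toContinuousLinearMap T).hasFDerivAt.comp_hasDerivAt s h1)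
    have hcomm : Commute Q (exp (s • H)) :=
      (((Commute.refl Q).mul_right (Commute.refl Q)).smul_right s).exp_right
    have hz : (LinearMap.toContinuousLinearMap T) (exp (s • H) * H) = 0 := by
      rw [LinearMap.coe_toContinuousLinearMap', hTapp]
      have hco : ((ε.comp (exp (s • H) * H) : V →L[ℂ] V) : V →ₗ[ℂ] V)
          = εₗ * (((exp (s • H) : V →L[ℂ] V) : V →ₗ[ℂ] V) * (Qₗ * Qₗ)) := by
        simp only [hH, hεₗ, hQₗ]
        rfl
      rw [hco]
      refine mcks_trace_aux εₗ Qₗ _ hAF ?_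
      have := hcomm.symm
      calc Qₗ * ((exp (s • H) : V →L[ℂ] V) : V →ₗ[ℂ] V)
          = ((Q * exp (s • H) : V →L[ℂ] V) : V →ₗ[ℂ] V) := rfl
        _ = ((exp (s • H) * Q : V →L[ℂ] V) : V →ₗ[ℂ] V) := by rw [hcomm]
        _ = ((exp (s • H) : V →L[ℂ] V) : V →ₗ[ℂ] V) * Qₗ := rfl
    rwa [hz] at h2
  have hconst : g (-(t : ℂ)) = g 0 :=
    is_const_of_deriv_eq_zero (fun s => (hderiv s).differentiableAt)
      (fun s => (hderiv s).deriv) _ _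
  -- trace of ε
  have htraceε : LinearMap.trace ℂ V εₗ
      = (finrank ℂ V₀ : ℂ) - (finrank ℂ V₀ᗮ : ℂ) := by
    set P₀ : V →ₗ[ℂ] V := V₀.subtype ∘ₗ (Submodule.orthogonalProjectionOnto V₀ : V →L[ℂ] V₀) with hP₀
    set P₁ : V →ₗ[ℂ] V := V₀ᗮ.subtype ∘ₗ (Submodule.orthogonalProjectionOnto V₀ᗮ : V →L[ℂ] V₀ᗮ) with hP₁
    have hproj0 : LinearMap.IsProj V₀ P₀ := by
      constructor
      · intro x; exact (Submodule.orthogonalProjectionOnto V₀ x).2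
      · intro x hx
        simp [hP₀, Submodule.starProjection_eq_self_iff.mpr hx]
    have hproj1 : LinearMap.IsProj V₀ᗮ P₁ := by
      constructor
      · intro x; exact (Submodule.orthogonalProjectionOnto V₀ᗮ x).2
      · intro x hx
        simp [hP₁, Submodule.starProjection_eq_self_iff.mpr hx]
    have hεeq : εₗ = P₀ - P₁ := by
      apply LinearMap.ext; intro x
      have hx : (Submodule.orthogonalProjectionOnto V₀ x : V) + (Submodule.orthogonalProjectionOnto V₀ᗮ x : V) = x :=
          Submodule.starProjection_add_starProjection_orthogonal x
      have hεx : ε x = (Submodule.orthogonalProjectionOnto V₀ x : V) - (Submodule.orthogonalProjectionOnto V₀ᗮ x : V) := by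
        conv_lhs => rw [← hx]
        rw [map_add, hε0 _ (Submodule.orthogonalProjectionOnto V₀ x).2, hε1 _ (Submodule.orthogonalProjectionOnto V₀ᗮ x).2]
        abel
      simpa [hεₗ, hP₀, hP₁] using hεx
    rw [hεeq, map_sub, hproj0.trace, hproj1.trace]
  -- index identity
  have hindex : (finrank ℂ V₀ : ℤ) - (finrank ℂ V₀ᗮ : ℤ)
      = (finrank ℂ (LinearMap.ker Qₗ ⊓ V₀ : Submodule ℂ V) : ℤ)
        - (finrank ℂ (LinearMap.ker Qₗ ⊓ V₀ᗮ : Submodule ℂ V) : ℤ) := by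
    have hrange : ∀ x y : V, Qₗ y = x → Qₗ x = 0 → x = 0 := by
      intro x y hy hx
      have h' : (inner ℂ (Qₗ y) x : ℂ) = inner ℂ y (Qₗ x) := hQ y x
      rw [hy, hx, inner_zero_right] at h'
      exact inner_self_eq_zero.mp h' 
    have hB : finrank ℂ (V₀.map Qₗ : Submodule ℂ V) = finrank ℂ (V₀ᗮ.map Qₗ : Submodule ℂ V) := by
      apply le_antisymm
      · apply mcks_le_aux _ _ Qₗ
        · rintro x ⟨y, hy, rfl⟩
          exact ⟨Qₗ y, h0 y hy, rfl⟩
        · rintro x ⟨y, hy, rfl⟩ hx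
          exact hrange _ y rfl hx
      · apply mcks_le_aux _ _ Qₗ
        · rintro x ⟨y, hy, rfl⟩
          exact ⟨Qₗ y, h1 y hy, rfl⟩
        · rintro x ⟨y, hy, rfl⟩ hx
          exact hrange _ y rfl hx
    have hA := mcks_rank_aux V₀ Qₗ
    have hC := mcks_rank_aux V₀ᗮ Qₗ
    omega
  -- put everything together
  have hg0 : g 0 = LinearMap.trace ℂ V εₗ := by
    rw [hgdef]
    simp only [zero_smul, exp_zero, LinearMap.coe_toContinuousLinearMap', hTapp]
    congr 1
  have hLHS : LinearMap.trace ℂ V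
      ((ε.comp (NormedSpace.exp ((-(t : ℂ)) • (Q.comp Q)))) : V →ₗ[ℂ] V) = g (-(t : ℂ)) := by
    show _ = (LinearMap.toContinuousLinearMap T) (exp ((-(t : ℂ)) • H))
    rw [LinearMap.coe_toContinuousLinearMap', hTapp]
    rfl
  rw [hLHS, hconst, hg0, htraceε]
  rw [hQₗ] at hindex
  exact_mod_cast hindex
end

section
/- Let V be a finite-dimensional complex inner product space with an orthogonal decomposition V = V₀ ⊕ V₁ (V₁ the orthogonal complement of V₀), grading operator ε (identity on V₀, minus identity on V₁), and let Q : V → V be a self-adjoint odd linear map (Q(V₀) ⊆ V₁ and Q(V₁) ⊆ V₀). Let A : V → V be an even linear map (A(V₀) ⊆ V₀ and A(V₁) ⊆ V₁) that commutes with Q. Then for every real number s, trace(ε ∘ A ∘ exp(−s • Q²)) = trace(ε ∘ A ∘ P), where P is the orthogonal projection of V onto ker Q. In particular trace(ε ∘ A ∘ exp(−s • Q²)) is independent of s. -/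
lemma exp_apply_eq_self_of_apply_eq_zero {V : Type*} [NormedAddCommGroup V] [NormedSpace ℂ V]
    [CompleteSpace V] (N : V →L[ℂ] V) (x : V) (hx : N x = 0) :
    NormedSpace.exp N x = x := by
  have hsum : Summable fun n : ℕ => ((n.factorial : ℂ))⁻¹ • N ^ n :=
    NormedSpace.expSeries_summable' (𝕂 := ℂ) N
  have h1 : NormedSpace.exp N x = ∑' n : ℕ, (((n.factorial : ℂ))⁻¹ • N ^ n) x := by
    rw [NormedSpace.exp_eq_tsum ℂ]
    exact ((ContinuousLinearMap.apply ℂ V x).map_tsum hsum)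
  rw [h1, tsum_eq_single 0]
  · simp
  · intro n hn
    obtain ⟨m, rfl⟩ := Nat.exists_eq_succ_of_ne_zero hn
    have : (N ^ (m + 1)) x = 0 := by
      rw [pow_succ, ContinuousLinearMap.mul_apply, hx, map_zero]
    simp [this]


/-- generalized McKean–Singer: Let `V` be a finite-dimensional complex
inner product space with orthogonal decomposition `V = V₀ ⊕ V₀ᗮ`, grading operator `ε`,
`Q` a self-adjoint odd operator, and `A` an even operator commuting with `Q`.  Then for
every real `s`, `trace(ε ∘ A ∘ exp(−s • Q²)) = trace(ε ∘ A ∘ P)` where `P` is the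
orthogonal projection onto `ker Q`. -/
theorem mcKean_singer_with_even_symmetry
    {V : Type*} [NormedAddCommGroup V] [InnerProductSpace ℂ V] [FiniteDimensional ℂ V]
    (V₀ : Submodule ℂ V)
    (Q : V →L[ℂ] V) (hQ : LinearMap.IsSymmetric (Q : V →ₗ[ℂ] V))
    (h0 : ∀ x ∈ V₀, Q x ∈ V₀ᗮ) (h1 : ∀ x ∈ V₀ᗮ, Q x ∈ V₀)
    (ε : V →L[ℂ] V) (hε0 : ∀ x ∈ V₀, ε x = x) (hε1 : ∀ x ∈ V₀ᗮ, ε x = -x)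
    (A : V →L[ℂ] V) (hA0 : ∀ x ∈ V₀, A x ∈ V₀) (hA1 : ∀ x ∈ V₀ᗮ, A x ∈ V₀ᗮ)
    (hAQ : A.comp Q = Q.comp A)
    (P : V →L[ℂ] V)
    (hP : P = (LinearMap.ker (Q : V →ₗ[ℂ] V)).subtypeL.comp
        ((LinearMap.ker (Q : V →ₗ[ℂ] V)).orthogonalProjectionOnto))
    (s : ℝ) :
    LinearMap.trace ℂ V
        ((ε.comp (A.comp (NormedSpace.exp ((-(s : ℂ)) • (Q.comp Q))))) : V →ₗ[ℂ] V)
      = LinearMap.trace ℂ V ((ε.comp (A.comp P)) : V →ₗ[ℂ] V) := by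
  classical
  set E : V →L[ℂ] V := NormedSpace.exp ((-(s : ℂ)) • (Q.comp Q)) with hE
  set Qₗ : V →ₗ[ℂ] V := (Q : V →ₗ[ℂ] V) with hQl
  set K : Submodule ℂ V := LinearMap.ker Qₗ with hKdef
  -- anticommutation of ε and Q
  have hQε : ∀ x : V, ε (Q x) = - Q (ε x) := by
    intro x
    have hp : (V₀.orthogonalProjectionOnto x : V) ∈ V₀ := (V₀.orthogonalProjectionOnto x).2
    have hq : x - V₀.orthogonalProjectionOnto x ∈ V₀ᗮ :=
      V₀.sub_starProjection_mem_orthogonal x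
    set p : V := (V₀.orthogonalProjectionOnto x : V)
    set q : V := x - p with hqdef
    have hx : x = p + q := by rw [hqdef]; abel
    rw [hx]
    have e1 : ε (Q p) = - Q p := hε1 _ (h0 p hp)
    have e2 : ε (Q q) = Q q := hε0 _ (h1 q hq)
    simp only [map_add, e1, e2, hε0 p hp, hε1 q hq, map_neg]
    abel
  have hεQ : ∀ x : V, Q (ε x) = - ε (Q x) := by
    intro x; rw [hQε, neg_neg]
  -- pointwise commutation facts
  have hAQ' : ∀ x : V, A (Q x) = Q (A x) := by
    intro x
    have := congrArg (fun (T : V →L[ℂ] V) => T x) hAQ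
    simpa using this
  have hcQ : Commute Q ((-(s : ℂ)) • (Q.comp Q)) :=
    ((Commute.refl Q).mul_right (Commute.refl Q)).smul_right _
  have hQE : Commute Q E := hcQ.exp_right
  have hQE' : ∀ x : V, Q (E x) = E (Q x) := by
    intro x
    rw [← ContinuousLinearMap.mul_apply, hQE.eq, ContinuousLinearMap.mul_apply]
  have hcA : Commute A ((-(s : ℂ)) • (Q.comp Q)) := by
    have hAQc : Commute A Q := hAQ
    exact (hAQc.mul_right hAQc).smul_right _
  have hAE : Commute A E := hcA.exp_right
  have hAE' : ∀ x : V, A (E x) = E (A x) := by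
    intro x
    rw [← ContinuousLinearMap.mul_apply, hAE.eq, ContinuousLinearMap.mul_apply]
  -- kernel and range
  have hrange : Kᗮ = LinearMap.range Qₗ := by
    have hker : K = (LinearMap.range Qₗ)ᗮ := by
      ext x
      simp only [hKdef, LinearMap.mem_ker, Submodule.mem_orthogonal]
      constructor
      · rintro hx u ⟨y, rfl⟩
        rw [hQ y x, hx, inner_zero_right]
      · intro h
        have h2 : ∀ y : V, (inner ℂ (y : V) (Qₗ x) : ℂ) = 0 := by
          intro y
          rw [← hQ y x]
          exact h _ ⟨y, rfl⟩
        have := h2 (Qₗ x)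
        rwa [inner_self_eq_zero] at this
    rw [hker, Submodule.orthogonal_orthogonal]
  -- maps-to facts
  have hmemK : ∀ x : V, x ∈ K ↔ Q x = 0 := fun x => Iff.rfl
  have hEK : ∀ x ∈ K, E x = x := by
    intro x hx
    apply exp_apply_eq_self_of_apply_eq_zero
    have hx0 : Q x = 0 := hx
    simp [hx0]
  have hTK : ∀ x ∈ K, ε (A (E x)) ∈ K := by
    intro x hx
    have hx0 : Q x = 0 := hx
    show Q (ε (A (E x))) = 0
    rw [hεQ, ← hAQ', hQE', hx0, map_zero, map_zero, map_zero, neg_zero]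
  have hTW : ∀ x ∈ Kᗮ, ε (A (E x)) ∈ Kᗮ := by
    intro x hx
    rw [hrange] at hx ⊢
    obtain ⟨y, rfl⟩ := hx
    refine ⟨-(ε (A (E y))), ?_⟩
    show Q (-(ε (A (E y)))) = ε (A (E (Qₗ y)))
    rw [map_neg, hεQ, neg_neg, ← hAQ', hQE']
    rfl
  have hQW : ∀ x ∈ Kᗮ, Q x ∈ Kᗮ := by
    intro x hx
    rw [hrange]
    exact ⟨x, rfl⟩
  -- projection facts
  have hPmem : ∀ x : V, P x ∈ K := by
    intro x; rw [hP]; exact (K.orthogonalProjectionOnto x).2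
  have hPK : ∀ x ∈ K, P x = x := by
    intro x hx
    rw [hP]
    exact Submodule.starProjection_eq_self_iff.mpr hx
  have hPW : ∀ x ∈ Kᗮ, P x = 0 := by
    intro x hx
    rw [hP]
    show ((K.orthogonalProjectionOnto x : K) : V) = 0
    rw [Submodule.orthogonalProjectionOnto_apply_of_mem_orthogonal hx]
    rfl
  have hT'K : ∀ x : V, ε (A (P x)) ∈ K := by
    intro x
    show Q (ε (A (P x))) = 0
    have : Q (P x) = 0 := hPmem x
    rw [hεQ, ← hAQ', this, map_zero, map_zero, neg_zero]
  -- direct sum decomposition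
  have hcompl : IsCompl K Kᗮ := Submodule.isCompl_orthogonal_of_hasOrthogonalProjection
  set N : Bool → Submodule ℂ V := fun b => cond b K Kᗮ with hNdef
  have hN : DirectSum.IsInternal N := by
    rw [DirectSum.isInternal_submodule_iff_isCompl N (i := true) (j := false)
      (by simp) (by ext b; cases b <;> simp)]
    exact hcompl
  set T : V →ₗ[ℂ] V := ((ε.comp (A.comp E)) : V →ₗ[ℂ] V) with hT
  set T' : V →ₗ[ℂ] V := ((ε.comp (A.comp P)) : V →ₗ[ℂ] V) with hT'
  have hTapp : ∀ x : V, T x = ε (A (E x)) := fun x => rfl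
  have hT'app : ∀ x : V, T' x = ε (A (P x)) := fun x => rfl
  have hmapsT : ∀ b, Set.MapsTo T (N b) (N b) := by
    rintro (_ | _) x hx
    · exact hTW x hx
    · exact hTK x hx
  have hmapsT' : ∀ b, Set.MapsTo T' (N b) (N b) := by
    rintro (_ | _) x hx
    · show ε (A (P x)) ∈ Kᗮ
      rw [hPW x hx, map_zero, map_zero]
      exact Submodule.zero_mem _
    · exact hT'K x
  rw [LinearMap.trace_eq_sum_trace_restrict hN hmapsT,
    LinearMap.trace_eq_sum_trace_restrict hN hmapsT', Fintype.sum_bool, Fintype.sum_bool]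
  -- the K-components agree
  have hKeq : T.restrict (hmapsT true) = T'.restrict (hmapsT' true) := by
    ext x
    show T (x : V) = T' (x : V)
    rw [hTapp, hT'app, hEK _ x.2, hPK _ x.2]
  -- the W-components vanish
  have hW'0 : T'.restrict (hmapsT' false) = 0 := by
    ext x
    show T' (x : V) = (0 : V)
    rw [hT'app, hPW _ x.2, map_zero, map_zero]
  -- Q restricted to Kᗮ is a bijection
  set R : Kᗮ →ₗ[ℂ] Kᗮ := Qₗ.restrict (fun x hx => hQW x hx) with hR
  have hRinj : Function.Injective R := by
    rw [← LinearMap.ker_eq_bot, Submodule.eq_bot_iff]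
    rintro ⟨x, hx⟩ hx0
    have hQx : Q x = 0 := congrArg Subtype.val hx0
    have hxK : x ∈ K := hQx
    have : x = 0 := (Submodule.mem_bot ℂ).mp (by
      rw [← (Submodule.orthogonal_disjoint K).eq_bot]
      exact ⟨hxK, hx⟩)
    exact Subtype.ext this
  have hRsurj : Function.Surjective R :=
    (LinearMap.injective_iff_surjective).mp hRinj
  set e : Kᗮ ≃ₗ[ℂ] Kᗮ := LinearEquiv.ofBijective R ⟨hRinj, hRsurj⟩ with he
  set f : Kᗮ →ₗ[ℂ] Kᗮ := T.restrict (hmapsT false) with hf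
  have hanti : ∀ y : Kᗮ, R (f y) = - f (R y) := by
    intro y
    apply Subtype.ext
    show Q (T (y : V)) = -(T (Q (y : V)))
    rw [hTapp, hTapp, hεQ, ← hAQ', hQE']
  have hkey : e.conj f = -f := by
    ext y
    have h1 : e.conj f y = R (f (e.symm y)) := rfl
    have h2 : R (e.symm y) = y := e.apply_symm_apply y
    rw [h1, hanti, h2]
    rfl
  have htrf : LinearMap.trace ℂ Kᗮ f = 0 := by
    have h3 := LinearMap.trace_conj' f e
    rw [hkey, map_neg] at h3
    have : LinearMap.trace ℂ Kᗮ f + LinearMap.trace ℂ Kᗮ f = 0 := by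
      nth_rewrite 1 [← h3]; ring
    exact add_self_eq_zero.mp this
  rw [hKeq, hW'0, map_zero]
  congr 1
end

section
/- Let A be a ring, E ⊆ A a subring, and N ⊆ A an additive subgroup such that θ² = 0 for every θ ∈ N and θ·η ∈ E for all θ, η ∈ N. Then the set E × N equipped with the multiplication (t, θ) · (s, η) := (t + s + θη, θ + η) is a group, with identity element (0, 0) and with the inverse of (t, θ) given by (−t, −θ). -/
/-- The super Euclidean multiplication `(t, θ) · (s, η) := (t + s + θη, θ + η)` on
pairs of an even element `t ∈ E` and an odd element `θ ∈ N`. -/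
def superEucMul₁ {A : Type*} [Ring A] (E : Subring A) (N : AddSubgroup A)
    (hmul : ∀ θ ∈ N, ∀ η ∈ N, θ * η ∈ E) : E × N → E × N → E × N :=
  fun p q =>
    (p.1 + q.1 + ⟨(p.2 : A) * (q.2 : A), hmul _ p.2.2 _ q.2.2⟩, p.2 + q.2)

/-- If every `θ ∈ N` satisfies `θ² = 0` and products of elements of `N`
lie in `E`, then `E × N` with multiplication `(t, θ)·(s, η) = (t + s + θη, θ + η)` is a
group with identity `(0, 0)` and inverse `(t, θ)⁻¹ = (−t, −θ)`. -/
theorem superEucMul₁_group {A : Type*} [Ring A] (E : Subring A) (N : AddSubgroup A)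
    (hsq : ∀ θ ∈ N, θ * θ = 0) (hmul : ∀ θ ∈ N, ∀ η ∈ N, θ * η ∈ E) :
    (∀ p q r : E × N,
        superEucMul₁ E N hmul (superEucMul₁ E N hmul p q) r
          = superEucMul₁ E N hmul p (superEucMul₁ E N hmul q r)) ∧
    (∀ p : E × N, superEucMul₁ E N hmul ((0 : E), (0 : N)) p = p) ∧
    (∀ p : E × N, superEucMul₁ E N hmul p ((0 : E), (0 : N)) = p) ∧
    (∀ p : E × N,
        superEucMul₁ E N hmul p (-p.1, -p.2) = ((0 : E), (0 : N)) ∧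
        superEucMul₁ E N hmul (-p.1, -p.2) p = ((0 : E), (0 : N))) := by
  refine ⟨?_, ?_, ?_, ?_⟩
  · intro p q r
    simp only [superEucMul₁, Prod.ext_iff, Subtype.ext_iff]
    constructor
    · push_cast; noncomm_ring
    · exact add_assoc _ _ _
  · intro p
    simp only [superEucMul₁, Prod.ext_iff, Subtype.ext_iff]
    constructor
    · push_cast; noncomm_ring
    · simp
  · intro p
    simp only [superEucMul₁, Prod.ext_iff, Subtype.ext_iff]
    constructor
    · push_cast; noncomm_ring
    · simp
  · intro p
    constructor <;>
    · simp only [superEucMul₁, Prod.ext_iff, Subtype.ext_iff]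
      constructor
      · push_cast
        have := hsq _ p.2.2
        simp [this, mul_neg, neg_mul]
      · simp
end
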